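/- Let partition pieces be constructed greedily subject to a capacity bound D, where D = ceil((1/m)(sum_{j in N} p_j + sum_{u=1}^r sum_{g in union_{j in R^u} M(j)} p_g)) + max_u (max_{j in R^u} p_j + sum_{g in union_{j in R^u} M(j)} p_g) - 1. If the greedy construction fails to add some element i of group R^k to the current part P^e (i.e., adding i would exceed D), then sum_{j in P^e} p_j + sum_{j in union of M(g) over the groups fully represented in P^e} p_j >= (1/m)(sum_{j in N} p_j + sum_{u=1}^r sum_{g in union_{j in R^u} M(j)} p_g). -/

import Mathlib

open Finset

lemma sum_biUnion_le_aux {α β : Type*} [DecidableEq α] [DecidableEq β] (s : Finset α)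
    (t : α → Finset β) (f : β → ℕ) :
    ∑ x ∈ s.biUnion t, f x ≤ ∑ a ∈ s, ∑ x ∈ t a, f x := by
  induction s using Finset.induction with
  | empty => simp
  | insert _ _ ha ih =>
    rw [Finset.biUnion_insert, Finset.sum_insert ha]
    have h : ∀ (s t : Finset β), ∑ x ∈ s ∪ t, f x ≤ ∑ x ∈ s, f x + ∑ x ∈ t, f x := by
      intro s t
      rw [← Finset.sum_union_inter]; exact Nat.le_add_right _ _
    exact (h _ _).trans (by gcongr)

/-- If the greedy construction fails to add an element `i` of group `R^k` to
the current part `P` (adding `i` would exceed the capacity `D`), then the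
weight of `P` plus the weight of the associated-set unions of the groups
represented in `P` (indexed by `K`) is at least
`(1/m) (∑_{j ∈ N} p_j + ∑_u ∑_{g ∈ ⋃_{j ∈ R^u} M(j)} p_g)`. -/
theorem stmt_15 {α : Type*} [DecidableEq α] (N M : Finset α) (p : α → ℕ)
    (Ma : α → Finset α) (m r : ℕ) (hm : 0 < m)
    (hNM : Disjoint N M) (hp : ∀ i ∈ N ∪ M, 0 < p i)
    (hMa : ∀ i ∈ N, Ma i ⊆ M) (hU : N.biUnion Ma = M)
    (R : Fin r → Finset α)
    (hRdisj : ∀ u u', u ≠ u' → Disjoint (R u) (R u'))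
    (hRcover : Finset.univ.biUnion R = N)
    (D : ℕ)
    (hD : D = ((∑ j ∈ N, p j + ∑ u, ∑ g ∈ (R u).biUnion Ma, p g) + m - 1) / m
      + Finset.univ.sup (fun u => (R u).sup p + ∑ g ∈ (R u).biUnion Ma, p g) - 1)
    (P : Finset α) (hPN : P ⊆ N)
    (i : α) (k : Fin r) (hik : i ∈ R k) (hiP : i ∉ P)
    (K : Finset (Fin r))
    (hK : P.biUnion Ma ⊆ K.biUnion (fun u => (R u).biUnion Ma))
    (hfail : D < ∑ j ∈ insert i P, p j + ∑ j ∈ (insert i P).biUnion Ma, p j) :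
    ((∑ j ∈ N, p j + ∑ u, ∑ g ∈ (R u).biUnion Ma, p g : ℕ) : ℚ) / m ≤
      ((∑ j ∈ P, p j + ∑ u ∈ K, ∑ g ∈ (R u).biUnion Ma, p g : ℕ) : ℚ) := by
  set S := ∑ j ∈ N, p j + ∑ u, ∑ g ∈ (R u).biUnion Ma, p g with hSdef
  set X := ∑ j ∈ P, p j + ∑ u ∈ K, ∑ g ∈ (R u).biUnion Ma, p g with hXdef
  set C := Finset.univ.sup (fun u => (R u).sup p + ∑ g ∈ (R u).biUnion Ma, p g) with hCdef
  have hiN : i ∈ N := by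
    rw [← hRcover]; exact mem_biUnion.2 ⟨k, mem_univ k, hik⟩
  have hpi : 0 < p i := hp i (mem_union_left _ hiN)
  have hS : 0 < S :=
    lt_of_lt_of_le hpi (le_trans (Finset.single_le_sum (fun _ _ => Nat.zero_le _) hiN)
      (Nat.le_add_right _ _))
  have hC : p i + ∑ g ∈ Ma i, p g ≤ C := by
    have h1 : p i ≤ (R k).sup p := Finset.le_sup hik
    have h2 : ∑ g ∈ Ma i, p g ≤ ∑ g ∈ (R k).biUnion Ma, p g :=
      Finset.sum_le_sum_of_subset (fun x hx => mem_biUnion.2 ⟨i, hik, hx⟩)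
    exact le_trans (add_le_add h1 h2) (Finset.le_sup (f := fun u => (R u).sup p + ∑ g ∈ (R u).biUnion Ma, p g) (mem_univ k))
  have hT : ∑ j ∈ insert i P, p j + ∑ j ∈ (insert i P).biUnion Ma, p j ≤ X + C := by
    rw [Finset.sum_insert hiP, Finset.biUnion_insert]
    have h3 : ∑ j ∈ Ma i ∪ P.biUnion Ma, p j ≤ ∑ j ∈ Ma i, p j + ∑ j ∈ P.biUnion Ma, p j := by
      rw [← Finset.sum_union_inter]; exact Nat.le_add_right _ _
    have h4 : ∑ j ∈ P.biUnion Ma, p j ≤ ∑ u ∈ K, ∑ g ∈ (R u).biUnion Ma, p g :=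
      (Finset.sum_le_sum_of_subset hK).trans (sum_biUnion_le_aux _ _ _)
    calc p i + ∑ j ∈ P, p j + ∑ j ∈ Ma i ∪ P.biUnion Ma, p j
        ≤ p i + ∑ j ∈ P, p j + (∑ j ∈ Ma i, p j + ∑ j ∈ P.biUnion Ma, p j) := by gcongr
      _ ≤ p i + ∑ j ∈ P, p j + (∑ j ∈ Ma i, p j + ∑ u ∈ K, ∑ g ∈ (R u).biUnion Ma, p g) := by
          gcongr
      _ = (∑ j ∈ P, p j + ∑ u ∈ K, ∑ g ∈ (R u).biUnion Ma, p g) + (p i + ∑ j ∈ Ma i, p j) := by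
          ring
      _ ≤ X + C := by rw [hXdef]; gcongr
  have hQ : (S + m - 1) / m ≤ X := by
    have h5 : (S + m - 1) / m + C - 1 < X + C := lt_of_le_of_lt (hD ▸ le_refl D) (lt_of_lt_of_le hfail hT)
    have hQpos : 0 < (S + m - 1) / m := by
      apply Nat.div_pos _ hm
      omega
    omega
  have hmul : S ≤ X * m := by
    have h6 : S + m - 1 < X * m + m := by
      have := (Nat.div_lt_iff_lt_mul hm).1 (Nat.lt_succ_of_le hQ)
      rwa [Nat.succ_mul] at this
    omega
  rw [div_le_iff₀ (by exact_mod_cast hm)]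
  exact_mod_cast hmul
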